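/- Uniform lower bound for the family of rational functions away from their zeros: let m ≥ 2 and let z₁,…,z_m be pairwise distinct complex numbers. Then there exist constants C₀ > 0 and ρ > 0 such that for every μ = (μ₁,…,μ_m) ∈ ℂ^m there exists w ∈ ℂ with the closed disc of center w and radius ρ disjoint from {z₁,…,z_m} and with |Σ_{ℓ=1}^m μ_ℓ/(z_ℓ − ζ)| ≥ C₀ · ‖μ‖ for every ζ in that closed disc, where ‖μ‖ is the Euclidean norm of μ in ℂ^m. -/

import Mathlib

open Finset Metric

open Polynomial in
lemma aux_mu_eq_zero {m : ℕ} (hm0 : 0 < m) (z w : Fin m → ℂ) (hz : Function.Injective z)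
    (hw : Function.Injective w) (hzw : ∀ ℓ j, z ℓ - w j ≠ 0)
    (μ : Fin m → ℂ) (h : ∀ j, ∑ ℓ, μ ℓ / (z ℓ - w j) = 0) : ∀ i, μ i = 0 := by
  classical
  set p : ℂ[X] := ∑ ℓ, C (μ ℓ) * ∏ k ∈ Finset.univ.erase ℓ, (C (z k) - X) with hp
  have hevalgen : ∀ x : ℂ,
      p.eval x = ∑ ℓ, μ ℓ * ∏ k ∈ Finset.univ.erase ℓ, (z k - x) := by
    intro x
    simp [hp, eval_finset_sum, eval_prod]
  have heval : ∀ j, p.eval (w j) = 0 := by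
    intro j
    rw [hevalgen]
    have : ∑ ℓ, μ ℓ * ∏ k ∈ Finset.univ.erase ℓ, (z k - w j)
        = (∑ ℓ, μ ℓ / (z ℓ - w j)) * ∏ k, (z k - w j) := by
      rw [Finset.sum_mul]
      refine Finset.sum_congr rfl fun ℓ _ => ?_
      rw [← Finset.mul_prod_erase Finset.univ (fun k => z k - w j) (Finset.mem_univ ℓ)]
      field_simp
      rw [mul_div_assoc, div_self (hzw ℓ j), mul_one]
    rw [this, h j, zero_mul]
  have hdeg : p.natDegree < m := by
    have hle : p.natDegree ≤ m - 1 := by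
      apply Polynomial.natDegree_sum_le_of_forall_le
      intro ℓ _
      refine (Polynomial.natDegree_C_mul_le _ _).trans ?_
      refine (Polynomial.natDegree_prod_le _ _).trans ?_
      have h1 : ∀ k ∈ Finset.univ.erase ℓ, ((C (z k) - X : ℂ[X])).natDegree ≤ 1 := by
        intro k _
        rw [show (C (z k) - X : ℂ[X]) = -(X - C (z k)) by ring, natDegree_neg,
          natDegree_X_sub_C]
      calc ∑ k ∈ Finset.univ.erase ℓ, ((C (z k) - X : ℂ[X])).natDegree
          ≤ ∑ _k ∈ Finset.univ.erase ℓ, 1 := Finset.sum_le_sum h1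
        _ = (Finset.univ.erase ℓ).card := by simp
        _ = m - 1 := by simp [Finset.card_erase_of_mem]
    omega
  have hp0 : p = 0 :=
    Polynomial.eq_zero_of_natDegree_lt_card_of_eval_eq_zero p hw heval
      (by simpa using hdeg)
  intro i
  have h0 : (0 : ℂ) = ∑ ℓ, μ ℓ * ∏ k ∈ Finset.univ.erase ℓ, (z k - z i) := by
    rw [← hevalgen, hp0, eval_zero]
  rw [Finset.sum_eq_single i (fun ℓ _ hℓ => by
    apply mul_eq_zero_of_right
    exact Finset.prod_eq_zero (Finset.mem_erase.mpr ⟨Ne.symm hℓ, Finset.mem_univ i⟩)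
      (by simp)) (fun hi => absurd (Finset.mem_univ i) hi)] at h0
  have hprod : (∏ k ∈ Finset.univ.erase i, (z k - z i)) ≠ 0 := by
    rw [Finset.prod_ne_zero_iff]
    intro k hk
    exact sub_ne_zero.mpr fun hkk => (Finset.mem_erase.mp hk).1 (hz hkk)
  exact (mul_eq_zero.mp h0.symm).resolve_right hprod

/-- Uniform lower bound for the family of rational functions `ζ ↦ Σ_ℓ μ_ℓ/(z_ℓ - ζ)`
away from their zeros: for pairwise distinct `z₁,…,z_m ∈ ℂ` there are `C₀ > 0` and
`ρ > 0` such that for every `μ ∈ ℂ^m` there is a closed disc of radius `ρ` disjoint from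
`{z₁,…,z_m}` on which `|Σ_ℓ μ_ℓ/(z_ℓ - ζ)| ≥ C₀ ‖μ‖` (Euclidean norm of `μ`). -/
theorem uniform_lower_bound_rational_family {m : ℕ} (hm : 2 ≤ m) (z : Fin m → ℂ)
    (hz : Function.Injective z) :
    ∃ C₀ > 0, ∃ ρ > 0, ∀ μ : EuclideanSpace ℂ (Fin m), ∃ w : ℂ,
      (∀ ℓ, z ℓ ∉ Metric.closedBall w ρ) ∧
      ∀ ζ ∈ Metric.closedBall w ρ, C₀ * ‖μ‖ ≤ ‖∑ ℓ, μ ℓ / (z ℓ - ζ)‖ := by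
  classical
  have hm0 : 0 < m := by omega
  have hmR : (0:ℝ) < (m:ℝ) := by exact_mod_cast hm0
  haveI : Nonempty (Fin m) := ⟨⟨0, hm0⟩⟩
  set S : ℝ := ∑ ℓ, ‖z ℓ‖ with hS
  have hS0 : 0 ≤ S := Finset.sum_nonneg fun _ _ => norm_nonneg _
  have hSz : ∀ ℓ, ‖z ℓ‖ ≤ S := fun ℓ =>
    Finset.single_le_sum (fun i _ => norm_nonneg (z i)) (Finset.mem_univ ℓ)
  set w : Fin m → ℂ := fun j => ((S + 2 + ((j : ℕ) : ℝ) : ℝ) : ℂ) with hwdef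
  have hwabs : ∀ j, ‖w j‖ = S + 2 + ((j : ℕ) : ℝ) := by
    intro j
    simp only [hwdef, Complex.norm_real, Real.norm_eq_abs]
    have : (0:ℝ) ≤ ((j:ℕ):ℝ) := Nat.cast_nonneg _
    rw [abs_of_nonneg (by linarith)]
  have hdist : ∀ ℓ j, 2 ≤ ‖z ℓ - w j‖ := by
    intro ℓ j
    have h1 : ‖w j‖ - ‖z ℓ‖ ≤ ‖w j - z ℓ‖ :=
      norm_sub_norm_le _ _
    rw [norm_sub_rev]
    have h2 := hwabs j
    have h3 := hSz ℓ
    have h4 : (0:ℝ) ≤ ((j:ℕ):ℝ) := Nat.cast_nonneg _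
    linarith
  have hne : ∀ ℓ j, z ℓ - w j ≠ 0 := by
    intro ℓ j h
    have := hdist ℓ j
    rw [h] at this
    simp at this
    linarith
  have hw_inj : Function.Injective w := by
    intro a b hab
    simp only [hwdef, Complex.ofReal_inj] at hab
    have h1 : ((a:ℕ):ℝ) = ((b:ℕ):ℝ) := by linarith
    exact Fin.val_injective (Nat.cast_injective h1)
  let L : EuclideanSpace ℂ (Fin m) →ₗ[ℂ] EuclideanSpace ℂ (Fin m) :=
    { toFun := fun μ => WithLp.toLp 2 (fun j => ∑ ℓ, μ ℓ / (z ℓ - w j))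
      map_add' := by
        intro μ ν
        ext j
        simp [Finset.sum_add_distrib, add_div]
      map_smul' := by
        intro c μ
        ext j
        simp [Finset.mul_sum, mul_div_assoc] }
  have hLapp : ∀ (μ : EuclideanSpace ℂ (Fin m)) (j : Fin m),
      (L μ) j = ∑ ℓ, μ ℓ / (z ℓ - w j) := fun _ _ => rfl
  have hLinj : Function.Injective L := by
    rw [injective_iff_map_eq_zero]
    intro μ hμ
    have h0 : ∀ j, ∑ ℓ, μ ℓ / (z ℓ - w j) = 0 := by
      intro j
      have := congrArg (fun v => v j) hμ
      simpa [hLapp] using this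
    have hz0 := aux_mu_eq_zero hm0 z w hz hw_inj hne μ h0
    ext i
    exact hz0 i
  let e := (LinearEquiv.ofInjectiveEndo L hLinj).toContinuousLinearEquiv
  obtain ⟨K, hK⟩ : ∃ K : NNReal, AntilipschitzWith K (⇑e) := ⟨_, e.antilipschitz⟩
  set c : ℝ := (K : ℝ) + 1 with hc
  have hc0 : 0 < c := by positivity
  have hLlow : ∀ μ : EuclideanSpace ℂ (Fin m), ‖μ‖ ≤ c * ‖L μ‖ := by
    intro μ
    have h1 : ‖μ‖ ≤ (K:ℝ) * ‖e μ‖ := by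
      have := hK.le_mul_dist μ 0
      simpa [dist_zero_right, map_zero] using this
    have heμ : e μ = L μ := rfl
    rw [heμ] at h1
    nlinarith [norm_nonneg (L μ)]
  have hnorm_sum : ∀ v : EuclideanSpace ℂ (Fin m), ‖v‖ ≤ ∑ j, ‖v j‖ := by
    intro v
    rw [EuclideanSpace.norm_eq]
    have h1 : ∑ j, ‖v j‖ ^ 2 ≤ (∑ j, ‖v j‖) ^ 2 :=
      Finset.sum_sq_le_sq_sum_of_nonneg fun _ _ => norm_nonneg _
    calc Real.sqrt (∑ j, ‖v j‖ ^ 2) ≤ Real.sqrt ((∑ j, ‖v j‖) ^ 2) := Real.sqrt_le_sqrt h1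
      _ = ∑ j, ‖v j‖ := Real.sqrt_sq (Finset.sum_nonneg fun _ _ => norm_nonneg _)
      _ = ∑ j, ‖v j‖ := rfl
  have hcoord : ∀ (μ : EuclideanSpace ℂ (Fin m)) (ℓ : Fin m), ‖μ ℓ‖ ≤ ‖μ‖ := by
    intro μ ℓ
    rw [EuclideanSpace.norm_eq]
    have h1 : ‖μ ℓ‖ ^ 2 ≤ ∑ i, ‖μ i‖ ^ 2 :=
      Finset.single_le_sum (f := fun i => ‖μ i‖ ^ 2) (fun i _ => sq_nonneg _)
        (Finset.mem_univ ℓ)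
    have h2 := Real.sqrt_le_sqrt h1
    rw [Real.sqrt_sq (norm_nonneg _)] at h2
    exact h2
  set ε : ℝ := 1 / ((m:ℝ)^2 * c) with hε
  have hε0 : 0 < ε := by
    rw [hε]
    exact div_pos one_pos (mul_pos (pow_pos hmR 2) hc0)
  refine ⟨1 / (2 * (m:ℝ) * c), by positivity, min 1 ε, lt_min one_pos hε0, ?_⟩
  intro μ
  have hsum : ‖μ‖ / c ≤ ∑ j, ‖(L μ) j‖ := by
    have h1 := hLlow μ
    have h2 := hnorm_sum (L μ)
    rw [div_le_iff₀ hc0]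
    nlinarith [norm_nonneg (L μ)]
  obtain ⟨j, -, hj⟩ := Finset.exists_le_of_sum_le (Finset.univ_nonempty (α := Fin m)) (by
    show ∑ _j : Fin m, ‖μ‖ / ((m:ℝ) * c) ≤ ∑ j, ‖(L μ) j‖
    rw [Finset.sum_const, Finset.card_univ, Fintype.card_fin, nsmul_eq_mul]
    calc (m:ℝ) * (‖μ‖ / ((m:ℝ) * c)) = ‖μ‖ / c := by
          field_simp
      _ ≤ _ := hsum)
  rw [hLapp] at hj
  refine ⟨w j, ?_, ?_⟩
  · intro ℓ hmem
    rw [Metric.mem_closedBall, Complex.dist_eq] at hmem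
    have h1 := hdist ℓ j
    have h2 : min 1 ε ≤ 1 := min_le_left _ _
    linarith
  · intro ζ hζ
    rw [Metric.mem_closedBall, Complex.dist_eq] at hζ
    have hζ1 : ‖ζ - w j‖ ≤ 1 := hζ.trans (min_le_left _ _)
    have hζε : ‖ζ - w j‖ ≤ ε := hζ.trans (min_le_right _ _)
    have hzζ1 : ∀ ℓ, 1 ≤ ‖z ℓ - ζ‖ := by
      intro ℓ
      have h1 : ‖z ℓ - w j‖ ≤ ‖z ℓ - ζ‖ + ‖ζ - w j‖ := by
        calc ‖z ℓ - w j‖ = ‖(z ℓ - ζ) + (ζ - w j)‖ := by ring_nf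
          _ ≤ _ := norm_add_le _ _
      have h2 := hdist ℓ j
      linarith
    have hzζ : ∀ ℓ, z ℓ - ζ ≠ 0 := by
      intro ℓ h
      have := hzζ1 ℓ
      rw [h] at this
      simp at this
      linarith
    have hterm : ∀ ℓ, ‖μ ℓ / (z ℓ - w j) - μ ℓ / (z ℓ - ζ)‖ ≤ ‖μ‖ * ε / 2 := by
      intro ℓ
      rw [div_sub_div _ _ (hne ℓ j) (hzζ ℓ),
        show μ ℓ * (z ℓ - ζ) - (z ℓ - w j) * μ ℓ = μ ℓ * (w j - ζ) by ring,
        norm_div, norm_mul, norm_mul, norm_sub_rev (w j) ζ]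
      have hA := hdist ℓ j
      have hB := hzζ1 ℓ
      have hnum : ‖μ ℓ‖ * ‖ζ - w j‖ ≤ ‖μ‖ * ε :=
        mul_le_mul (hcoord μ ℓ) hζε (norm_nonneg _) (norm_nonneg _)
      have hden : 2 ≤ ‖z ℓ - w j‖ * ‖z ℓ - ζ‖ := by nlinarith
      exact div_le_div₀ (by positivity) hnum two_pos hden
    have hdiff : ‖(∑ ℓ, μ ℓ / (z ℓ - w j)) - ∑ ℓ, μ ℓ / (z ℓ - ζ)‖
        ≤ (m:ℝ) * (‖μ‖ * ε / 2) := by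
      rw [← Finset.sum_sub_distrib]
      refine (norm_sum_le _ _).trans ?_
      calc ∑ ℓ, ‖μ ℓ / (z ℓ - w j) - μ ℓ / (z ℓ - ζ)‖
          ≤ ∑ _ℓ : Fin m, ‖μ‖ * ε / 2 := Finset.sum_le_sum fun ℓ _ => hterm ℓ
        _ = (m:ℝ) * (‖μ‖ * ε / 2) := by
            rw [Finset.sum_const, Finset.card_univ, Fintype.card_fin, nsmul_eq_mul]
    have htri : ‖∑ ℓ, μ ℓ / (z ℓ - w j)‖
        ≤ ‖∑ ℓ, μ ℓ / (z ℓ - ζ)‖ + (m:ℝ) * (‖μ‖ * ε / 2) := by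
      have h1 : ‖∑ ℓ, μ ℓ / (z ℓ - w j)‖
          ≤ ‖∑ ℓ, μ ℓ / (z ℓ - ζ)‖
            + ‖(∑ ℓ, μ ℓ / (z ℓ - w j)) - ∑ ℓ, μ ℓ / (z ℓ - ζ)‖ := by
        calc ‖∑ ℓ, μ ℓ / (z ℓ - w j)‖
            = ‖(∑ ℓ, μ ℓ / (z ℓ - ζ))
              + ((∑ ℓ, μ ℓ / (z ℓ - w j)) - ∑ ℓ, μ ℓ / (z ℓ - ζ))‖ := by congr 1; ring
          _ ≤ _ := norm_add_le _ _
      linarith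
    have hkey : (m:ℝ) * (‖μ‖ * ε / 2) = ‖μ‖ / (2 * (m:ℝ) * c) := by
      rw [hε]
      field_simp
    have hhalf : ‖μ‖ / ((m:ℝ) * c) = 2 * (‖μ‖ / (2 * (m:ℝ) * c)) := by
      field_simp
    have hgoal : 1 / (2 * (m:ℝ) * c) * ‖μ‖ = ‖μ‖ / (2 * (m:ℝ) * c) := by ring
    rw [hgoal]
    linarith [hj, htri, hkey.symm]
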